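/- Assume W > 0 and 4I < zW. Then over all pairs (a,b) with a, b ∈ {−r/2, −r/2+1, …, r/2}, the function φ(a,b) = (W/4)(a+b)² − (W/4 − I/z)(a² + b²) attains its minimum exactly at the two pairs (−r/2, r/2) and (r/2, −r/2). -/
import Mathlib


open Finset

/-- The nearest-neighbour bond potential
`φ(a,b) = (W/4)(a+b)² − (W/4 − I/z)(a² + b²)`. -/
noncomputable def phi (z : ℕ) (I W : ℝ) (a b : ℝ) : ℝ :=
  W / 4 * (a + b) ^ 2 - (W / 4 - I / z) * (a ^ 2 + b ^ 2)

/-- The finite set `{j − r/2 : j = 0, 1, …, r}` of possible values of `Q_x = n_x − r/2`. -/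
noncomputable def chargeSet (r : ℕ) : Finset ℝ :=
  (Finset.range (r + 1)).image (fun (j : ℕ) => (j : ℝ) - r / 2)

lemma chargeSet_bounds (r : ℕ) {a : ℝ} (ha : a ∈ chargeSet r) :
    -((r : ℝ) / 2) ≤ a ∧ a ≤ (r : ℝ) / 2 := by
  simp only [chargeSet, mem_image, mem_range] at ha
  obtain ⟨j, hj, rfl⟩ := ha
  have h1 : (j : ℝ) ≤ r := by exact_mod_cast Nat.lt_succ_iff.mp hj
  have h2 : (0 : ℝ) ≤ j := Nat.cast_nonneg j
  constructor <;> linarith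

/-- For `W > 0` and `4I < zW`, the minimum of `φ` over
`chargeSet r × chargeSet r` is attained exactly at `(−r/2, r/2)` and `(r/2, −r/2)`. -/
theorem statement3 (r z : ℕ) (hr : 2 ≤ r) (hz : 2 ≤ z) (I W : ℝ)
    (hW : 0 < W) (hIW : 4 * I < (z : ℝ) * W) :
    (-(r / 2) : ℝ) ∈ chargeSet r ∧ ((r / 2 : ℝ)) ∈ chargeSet r ∧
    ∀ a ∈ chargeSet r, ∀ b ∈ chargeSet r,
      phi z I W (-(r / 2)) (r / 2) ≤ phi z I W a b ∧
      (phi z I W a b = phi z I W (-(r / 2)) (r / 2) ↔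
        (a = -(r / 2) ∧ b = (r / 2)) ∨ (a = (r / 2) ∧ b = -(r / 2))) := by
  have hz0 : (0 : ℝ) < z := by
    have : (2 : ℝ) ≤ z := by exact_mod_cast hz
    linarith
  have hc : 0 < W / 4 - I / z := by
    have : I / z < W / 4 := by
      rw [div_lt_div_iff₀ hz0 (by norm_num : (0:ℝ) < 4)]
      linarith
    linarith
  set c := W / 4 - I / z with hcdef
  clear_value c
  refine ⟨?_, ?_, ?_⟩
  · simp only [chargeSet, mem_image, mem_range]
    exact ⟨0, by omega, by push_cast; ring⟩
  · simp only [chargeSet, mem_image, mem_range]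
    exact ⟨r, by omega, by push_cast; ring⟩
  · intro a ha b hb
    obtain ⟨ha1, ha2⟩ := chargeSet_bounds r ha
    obtain ⟨hb1, hb2⟩ := chargeSet_bounds r hb
    set R : ℝ := (r : ℝ) / 2 with hR
    clear_value R
    have ha3 : a ^ 2 ≤ R ^ 2 := by nlinarith
    have hb3 : b ^ 2 ≤ R ^ 2 := by nlinarith
    have key : phi z I W a b - phi z I W (-R) R =
        W / 4 * (a + b) ^ 2 + c * (R ^ 2 - a ^ 2) + c * (R ^ 2 - b ^ 2) := by
      simp only [phi, hcdef]; ring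
    have h1 : 0 ≤ W / 4 * (a + b) ^ 2 := by positivity
    have h2 : 0 ≤ c * (R ^ 2 - a ^ 2) := mul_nonneg hc.le (by linarith)
    have h3 : 0 ≤ c * (R ^ 2 - b ^ 2) := mul_nonneg hc.le (by linarith)
    constructor
    · linarith [key, h1, h2, h3]
    · constructor
      · intro heq
        have h0 : W / 4 * (a + b) ^ 2 + c * (R ^ 2 - a ^ 2) + c * (R ^ 2 - b ^ 2) = 0 := by
          rw [← key]; linarith
        have e1 : W / 4 * (a + b) ^ 2 = 0 := le_antisymm (by linarith) h1
        have e2 : c * (R ^ 2 - a ^ 2) = 0 := le_antisymm (by linarith) h2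
        have e3 : c * (R ^ 2 - b ^ 2) = 0 := le_antisymm (by linarith) h3
        have t1 : a + b = 0 := by
          rcases mul_eq_zero.mp e1 with h | h
          · linarith
          · exact pow_eq_zero_iff (by norm_num) |>.mp h
        have t2 : R ^ 2 - a ^ 2 = 0 := by
          rcases mul_eq_zero.mp e2 with h | h
          · linarith
          · exact h
        have hfac : (a - R) * (a + R) = 0 := by linear_combination -t2
        rcases mul_eq_zero.mp hfac with h | h
        · right; constructor <;> linarith [hR]
        · left; constructor <;> linarith [hR]
      · rintro (⟨rfl, rfl⟩ | ⟨rfl, rfl⟩) <;> simp only [phi] <;> ring
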